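/- If F(x) = ½‖Ax - b‖² + η‖x‖₁ with η < ‖Aᵀb‖_∞ has a nonzero minimizer x*, then F(x*) ≥ η‖b‖/4. -/

import Mathlib

/-- If F(x) = ½‖Ax-b‖² + η‖x‖₁ with ‖A‖ ≤ 1 and 0 < η < ‖Aᵀb‖_∞ has a
nonzero minimizer x*, then F(x*) ≥ η‖b‖/4. -/
theorem stmt10 (k n : ℕ) (A : Matrix (Fin k) (Fin n) ℝ) (b : Fin k → ℝ)
    (η : ℝ) (hη : 0 < η)
    (hA : ∀ x : Fin n → ℝ, ∑ j, (A.mulVec x j)^2 ≤ ∑ i, (x i)^2)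
    (hηlt : ∃ i : Fin n, η < |A.transpose.mulVec b i|)
    (F : (Fin n → ℝ) → ℝ)
    (hF : ∀ y, F y = (1/2) * ∑ j, (A.mulVec y j - b j)^2 + η * ∑ l, |y l|)
    (xstar : Fin n → ℝ) (hmin : ∀ y, F xstar ≤ F y) (hne : xstar ≠ 0) :
    F xstar ≥ η * Real.sqrt (∑ j, (b j)^2) / 4 := by
  set S : ℝ := ∑ j, (b j)^2 with hS
  have hS0 : 0 ≤ S := Finset.sum_nonneg fun j _ => sq_nonneg _
  set β : ℝ := Real.sqrt S with hβ
  have hβ0 : 0 ≤ β := Real.sqrt_nonneg _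
  have hβsq : β ^ 2 = S := Real.sq_sqrt hS0
  -- Step 1: η < β
  have hηβ : η < β := by
    obtain ⟨i, hi⟩ := hηlt
    have hcol : ∑ j, (A j i)^2 ≤ 1 := by
      have h := hA (Pi.single i (1:ℝ))
      have h1 : ∀ j, A.mulVec (Pi.single i (1:ℝ)) j = A j i := by
        intro j
        simp [Matrix.mulVec, dotProduct, Pi.single_apply, mul_ite, Finset.sum_ite_eq']
      have h2 : ∑ l, (Pi.single i (1:ℝ) l)^2 = (1:ℝ) := by
        rw [Finset.sum_eq_single i]
        · simp
        · intro l _ hl; simp [Pi.single_apply, hl]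
        · simp
      simpa [h1, h2] using h
    have hval : A.transpose.mulVec b i = ∑ j, A j i * b j := by
      simp [Matrix.mulVec, dotProduct, Matrix.transpose]
    have hCS : (∑ j, A j i * b j)^2 ≤ (∑ j, (A j i)^2) * S :=
      Finset.sum_mul_sq_le_sq_mul_sq Finset.univ _ _
    have hsq : (A.transpose.mulVec b i)^2 ≤ S := by
      rw [hval]
      calc (∑ j, A j i * b j)^2 ≤ (∑ j, (A j i)^2) * S := hCS
        _ ≤ 1 * S := by
            apply mul_le_mul_of_nonneg_right hcol hS0
        _ = S := one_mul S
    have habs : |A.transpose.mulVec b i| ≤ β := by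
      rw [hβ, ← Real.sqrt_sq_eq_abs]
      exact Real.sqrt_le_sqrt hsq
    exact lt_of_lt_of_le hi habs
  -- abbreviations
  set u : Fin k → ℝ := A.mulVec xstar with hu
  set R2 : ℝ := ∑ j, (u j - b j)^2 with hR2
  have hR20 : 0 ≤ R2 := Finset.sum_nonneg fun j _ => sq_nonneg _
  have hL1nn : 0 ≤ ∑ l, |xstar l| := Finset.sum_nonneg fun l _ => abs_nonneg _
  rw [hF]
  by_cases hcase : (9/16) * S ≤ R2
  · -- residual large
    nlinarith [hβsq, hηβ, hβ0, hL1nn, hη.le, mul_le_mul_of_nonneg_left hL1nn hη.le]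
  · push_neg at hcase
    -- residual small: ‖u‖ ≥ β/4, hence ‖x‖₁ ≥ β/4
    have hsqrtR : Real.sqrt R2 ≤ (3/4) * β := by
      have : R2 ≤ (3/4 * β)^2 := by nlinarith [hβsq]
      calc Real.sqrt R2 ≤ Real.sqrt ((3/4*β)^2) := Real.sqrt_le_sqrt this
        _ = 3/4 * β := Real.sqrt_sq (by linarith)
    -- Minkowski via EuclideanSpace
    have hmink : β ≤ Real.sqrt (∑ j, (u j)^2) + Real.sqrt R2 := by
      let B : EuclideanSpace ℝ (Fin k) := WithLp.toLp 2 (fun j => b j)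
      let U : EuclideanSpace ℝ (Fin k) := WithLp.toLp 2 (fun j => u j)
      have htri : ‖B‖ ≤ ‖U‖ + ‖U - B‖ := by
        have := norm_sub_norm_le U (U - B)
        have h2 : U - (U - B) = B := by abel
        calc ‖B‖ = ‖U - (U - B)‖ := by rw [h2]
          _ ≤ ‖U‖ + ‖U - B‖ := norm_sub_le _ _
      have hnB : ‖B‖ = β := by
        rw [EuclideanSpace.norm_eq]
        congr 1
        apply Finset.sum_congr rfl
        intro j _
        rw [Real.norm_eq_abs, sq_abs]
      have hnU : ‖U‖ = Real.sqrt (∑ j, (u j)^2) := by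
        rw [EuclideanSpace.norm_eq]
        congr 1
        apply Finset.sum_congr rfl
        intro j _
        rw [Real.norm_eq_abs, sq_abs]
      have hnUB : ‖U - B‖ = Real.sqrt R2 := by
        rw [EuclideanSpace.norm_eq]
        congr 1
        apply Finset.sum_congr rfl
        intro j _
        simp only [PiLp.sub_apply]
        rw [Real.norm_eq_abs, sq_abs]
      rw [hnB, hnU, hnUB] at htri
      exact htri
    have hUbig : β/4 ≤ Real.sqrt (∑ j, (u j)^2) := by linarith
    have hx2 : ∑ j, (u j)^2 ≤ ∑ l, (xstar l)^2 := hA xstar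
    have hxsqrt : Real.sqrt (∑ j, (u j)^2) ≤ Real.sqrt (∑ l, (xstar l)^2) :=
      Real.sqrt_le_sqrt hx2
    have hL1 : Real.sqrt (∑ l, (xstar l)^2) ≤ ∑ l, |xstar l| := by
      have hkey : ∑ l, (xstar l)^2 ≤ (∑ l, |xstar l|)^2 := by
        calc ∑ l, (xstar l)^2 = ∑ l, |xstar l| * |xstar l| := by
              apply Finset.sum_congr rfl
              intro l _
              rw [← sq_abs, sq]
          _ ≤ ∑ l, |xstar l| * (∑ m, |xstar m|) := by
              apply Finset.sum_le_sum
              intro l hl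
              exact mul_le_mul_of_nonneg_left
                (Finset.single_le_sum (fun m _ => abs_nonneg (xstar m)) hl)
                (abs_nonneg _)
          _ = (∑ l, |xstar l|)^2 := by rw [← Finset.sum_mul]; ring
      calc Real.sqrt (∑ l, (xstar l)^2) ≤ Real.sqrt ((∑ l, |xstar l|)^2) :=
            Real.sqrt_le_sqrt hkey
        _ = ∑ l, |xstar l| := Real.sqrt_sq hL1nn
    have hfin : β/4 ≤ ∑ l, |xstar l| := by linarith
    have : η * (β/4) ≤ η * ∑ l, |xstar l| :=
      mul_le_mul_of_nonneg_left hfin hη.le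
    nlinarith [hR20]
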